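/- Let α ≥ 3 and t > 0, and let f(x) = f_{α,1/2,t}(x) = (t cos(π/(2α))/π) · (x² + t²)/(x⁴ + t⁴ + 2x²t² cos(π/α)). Then f′(x) > 0 for all x < 0 and f′(x) < 0 for all x > 0; hence x = 0 is the unique stationary point of f and f attains its unique global maximum at x = 0 (f is unimodal). -/

import Mathlib

open Real

/-- The mixture-of-asymmetric-Cauchy probability density `f_{α,p,t}`. -/
noncomputable def cauchyMixDensity (α p t x : ℝ) : ℝ :=
  (t * Real.cos (π / (2 * α)) / π) *
    ((x ^ 2 + t ^ 2 + 2 * (2 * p - 1) * x * t * Real.sin (π / (2 * α))) /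
      (x ^ 4 + t ^ 4 + 2 * x ^ 2 * t ^ 2 * Real.cos (π / α)))

/-- For `α ≥ 3` and `t > 0`, the symmetric density
`f = f_{α,1/2,t}` is unimodal: `f′ > 0` on `(−∞,0)`, `f′ < 0` on `(0,∞)`,
`x = 0` is the unique stationary point, and `f` attains its unique global
maximum at `x = 0`. -/
theorem cauchyMix_symmetric_unimodal (α t : ℝ) (hα : 3 ≤ α) (ht : 0 < t) :
    (∀ x : ℝ, x < 0 → 0 < deriv (cauchyMixDensity α (1 / 2) t) x) ∧
    (∀ x : ℝ, 0 < x → deriv (cauchyMixDensity α (1 / 2) t) x < 0) ∧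
    (∀ x : ℝ, deriv (cauchyMixDensity α (1 / 2) t) x = 0 ↔ x = 0) ∧
    (∀ x : ℝ, x ≠ 0 →
      cauchyMixDensity α (1 / 2) t x < cauchyMixDensity α (1 / 2) t 0) := by
  have hα0 : (0:ℝ) < α := by linarith
  have hπ : (0:ℝ) < π := Real.pi_pos
  set c := Real.cos (π / α) with hc_def
  set co := Real.cos (π / (2 * α)) with hco_def
  have hc : 1/2 ≤ c := by
    rw [hc_def, ← Real.cos_pi_div_three]
    apply Real.cos_le_cos_of_nonneg_of_le_pi
    · positivity
    · linarith
    · rw [div_le_div_iff₀ hα0 (by norm_num : (0:ℝ) < 3)]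
      nlinarith
  have hco : 0 < co := by
    rw [hco_def]
    apply Real.cos_pos_of_mem_Ioo
    constructor
    · have : 0 < π / (2 * α) := by positivity
      linarith
    · rw [div_lt_div_iff₀ (by linarith) (by norm_num : (0:ℝ) < 2)]
      nlinarith
  have hC : 0 < t * co / π := by positivity
  -- rewrite the density in a convenient form
  have hf : cauchyMixDensity α (1/2) t = fun x : ℝ =>
      (t * co / π) * ((x ^ 2 + t ^ 2) / (x ^ 4 + t ^ 4 + 2 * x ^ 2 * t ^ 2 * c)) := by
    funext y
    unfold cauchyMixDensity
    rw [← hc_def, ← hco_def]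
    ring
  have hDpos : ∀ x : ℝ, 0 < x ^ 4 + t ^ 4 + 2 * x ^ 2 * t ^ 2 * c := by
    intro x
    nlinarith [sq_nonneg x, sq_nonneg (x^2), pow_pos ht 4, sq_nonneg (x*t)]
  have hderiv : ∀ x : ℝ, HasDerivAt (cauchyMixDensity α (1/2) t)
      ((t * co / π) * ((-2 * x * (x ^ 4 + 2 * t ^ 2 * x ^ 2 + (2 * c - 1) * t ^ 4)) /
        (x ^ 4 + t ^ 4 + 2 * x ^ 2 * t ^ 2 * c) ^ 2)) x := by
    intro x
    rw [hf]
    have hN : HasDerivAt (fun x : ℝ => x ^ 2 + t ^ 2) (2 * x) x := by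
      simpa using (hasDerivAt_pow 2 x).add_const (t ^ 2)
    have hD : HasDerivAt (fun x : ℝ => x ^ 4 + t ^ 4 + 2 * x ^ 2 * t ^ 2 * c)
        (4 * x ^ 3 + (2 * t ^ 2 * c) * (2 * x)) x := by
      have h1 : HasDerivAt (fun x : ℝ => x ^ 4 + t ^ 4) (4 * x ^ 3) x := by
        simpa using (hasDerivAt_pow 4 x).add_const (t ^ 4)
      have h2 : HasDerivAt (fun x : ℝ => (2 * t ^ 2 * c) * x ^ 2)
          ((2 * t ^ 2 * c) * (2 * x)) x := by
        simpa using ((hasDerivAt_pow 2 x).const_mul (2 * t ^ 2 * c))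
      have heq : (fun x : ℝ => x ^ 4 + t ^ 4 + 2 * x ^ 2 * t ^ 2 * c)
          = (fun x : ℝ => (x ^ 4 + t ^ 4) + (2 * t ^ 2 * c) * x ^ 2) := by
        funext y; ring
      rw [heq]
      exact h1.add h2
    have h := (hN.div hD (hDpos x).ne').const_mul (t * co / π)
    refine h.congr_deriv ?_
    congr 1
    rw [div_eq_div_iff (by positivity) (by positivity)]
    ring
  have hP : ∀ x : ℝ, x ≠ 0 → 0 < x ^ 4 + 2 * t ^ 2 * x ^ 2 + (2 * c - 1) * t ^ 4 := by
    intro x hx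
    have hx4 : 0 < x ^ 4 := by positivity
    nlinarith [sq_nonneg x, pow_pos ht 4]
  have hneg : ∀ x : ℝ, x < 0 → 0 < deriv (cauchyMixDensity α (1/2) t) x := by
    intro x hx
    rw [(hderiv x).deriv]
    have h1 : 0 < -2 * x * (x ^ 4 + 2 * t ^ 2 * x ^ 2 + (2 * c - 1) * t ^ 4) :=
      mul_pos (by linarith) (hP x hx.ne)
    positivity
  have hpos : ∀ x : ℝ, 0 < x → deriv (cauchyMixDensity α (1/2) t) x < 0 := by
    intro x hx
    rw [(hderiv x).deriv]
    have h1 : -2 * x * (x ^ 4 + 2 * t ^ 2 * x ^ 2 + (2 * c - 1) * t ^ 4) < 0 := by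
      have := hP x hx.ne'
      nlinarith
    have h2 : 0 < (x ^ 4 + t ^ 4 + 2 * x ^ 2 * t ^ 2 * c) ^ 2 := by positivity
    exact mul_neg_of_pos_of_neg hC (div_neg_of_neg_of_pos h1 h2)
  refine ⟨hneg, hpos, ?_, ?_⟩
  · intro x
    constructor
    · intro hz
      by_contra hx
      rcases lt_or_gt_of_ne hx with h | h
      · exact absurd hz (ne_of_gt (hneg x h))
      · exact absurd hz (ne_of_lt (hpos x h))
    · rintro rfl
      rw [(hderiv 0).deriv]
      norm_num
  · intro x hx
    rw [hf]
    simp only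
    have hD0 : (0:ℝ) ^ 4 + t ^ 4 + 2 * 0 ^ 2 * t ^ 2 * c = t ^ 4 := by ring
    apply mul_lt_mul_of_pos_left _ hC
    rw [hD0]
    rw [div_lt_div_iff₀ (hDpos x) (by positivity)]
    have hx4 : 0 < x ^ 4 := by positivity
    nlinarith [mul_pos hx4 (pow_pos ht 2),
      mul_nonneg (mul_nonneg (by linarith : (0:ℝ) ≤ 2 * c - 1) (sq_nonneg x)) (pow_pos ht 4).le]
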